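/- Let D be a digraph with n vertices and girth g, and let P(D;x) be its dichromatic (chromatic) polynomial. Then the coefficients of x^{n−1}, x^{n−2}, ..., x^{n−g+2} in P(D;x) are zero, and the coefficient of x^{n−g+1} equals the negative of the number of directed cycles of length g in D. -/

import Mathlib

variable {V : Type*}

/-- A directed cycle in a digraph `D`, given as an injective map `Fin m → V`
(`m ≥ 2`) whose consecutive images (cyclically) are edges of `D`. -/
def IsCycleFun (D : V → V → Prop) {m : ℕ} (f : Fin m → V) : Prop :=
  2 ≤ m ∧ Function.Injective f ∧ ∀ i : Fin m, D (f i) (f (finRotate m i))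

/-- The set `S` contains a directed cycle of `D`. -/
def HasCycleIn (D : V → V → Prop) (S : Set V) : Prop :=
  ∃ (m : ℕ) (f : Fin m → V), IsCycleFun D f ∧ ∀ i, f i ∈ S

/-- Out-degree of a vertex. -/
noncomputable def outDeg (D : V → V → Prop) (v : V) : ℕ := Nat.card {u | D v u}

/-- In-degree of a vertex. -/
noncomputable def inDeg (D : V → V → Prop) (v : V) : ℕ := Nat.card {u | D u v}

/-- A coloring of the vertices of `D` with no monochromatic directed cycle. -/
def ProperColoring (D : V → V → Prop) {k : ℕ} (c : V → Fin k) : Prop :=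
  ∀ (m : ℕ) (f : Fin m → V), IsCycleFun D f → ∃ i j, c (f i) ≠ c (f j)

/-- The number of proper `k`-colorings of `D` (value of the dichromatic polynomial). -/
noncomputable def numColorings (V : Type*) (D : V → V → Prop) (k : ℕ) : ℕ :=
  Nat.card {c : V → Fin k // ProperColoring D c}

/-- The finset `S` carries a (Hamiltonian on `S`) directed cycle of `D`. -/
def IsCycleSet (D : V → V → Prop) (S : Finset V) : Prop :=
  2 ≤ S.card ∧ ∃ f : Fin S.card ≃ {x // x ∈ S},
    ∀ i, D (f i) (f (finRotate S.card i))

/-- The finset `S` induces exactly a directed cycle of `D`. -/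
def IsInducedCycleSet (D : V → V → Prop) (S : Finset V) : Prop :=
  2 ≤ S.card ∧ ∃ f : Fin S.card ≃ {x // x ∈ S},
    (∀ i, D (f i) (f (finRotate S.card i))) ∧
    ∀ a b : {x // x ∈ S}, D (a : V) b → ∃ i, f i = a ∧ f (finRotate S.card i) = b

/-- `D` has girth `g` : it has a directed cycle of length `g` and no shorter one. -/
def HasGirth (D : V → V → Prop) (g : ℕ) : Prop :=
  (∃ f : Fin g → V, IsCycleFun D f) ∧
    ∀ (m : ℕ) (f : Fin m → V), IsCycleFun D f → g ≤ m




open Finset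

section Aux
variable {V : Type*} [Fintype V]

/-- relation generated by a family of sets -/
def myrel (T : Finset (Finset V)) (a b : V) : Prop := ∃ S ∈ T, a ∈ S ∧ b ∈ S

def myst (T : Finset (Finset V)) : Setoid V :=
  ⟨Relation.EqvGen (myrel T), Relation.EqvGen.is_equivalence _⟩

noncomputable def myq (T : Finset (Finset V)) : ℕ := Nat.card (Quotient (myst T))

lemma lift_of_mono {T : Finset (Finset V)} {α : Sort*} {c : V → α}
    (hc : ∀ S ∈ T, ∀ a ∈ S, ∀ b ∈ S, c a = c b) :
    ∀ a b, Relation.EqvGen (myrel T) a b → c a = c b := by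
  intro a b h
  induction h with
  | rel x y h => obtain ⟨S, hS, hx, hy⟩ := h; exact hc S hS x hx y hy
  | refl => rfl
  | symm _ _ _ ih => exact ih.symm
  | trans _ _ _ _ _ ih1 ih2 => exact ih1.trans ih2

lemma count_mono (T : Finset (Finset V)) (k : ℕ) :
    Nat.card {c : V → Fin k // ∀ S ∈ T, ∀ a ∈ S, ∀ b ∈ S, c a = c b} = k ^ myq T := by
  have e : (Quotient (myst T) → Fin k) ≃
      {c : V → Fin k // ∀ S ∈ T, ∀ a ∈ S, ∀ b ∈ S, c a = c b} :=
    { toFun := fun gq => ⟨fun v => gq (Quotient.mk _ v), by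
        intro S hS a ha b hb
        exact congrArg gq (Quotient.sound (Relation.EqvGen.rel _ _ ⟨S, hS, ha, hb⟩))⟩
      invFun := fun c => Quotient.lift c.1 (lift_of_mono c.2)
      left_inv := fun gq => by
        funext x
        induction x using Quotient.ind
        rfl
      right_inv := fun c => rfl }
  rw [← Nat.card_congr e, Nat.card_fun, Nat.card_eq_fintype_card (α := Fin k),
    Fintype.card_fin, myq]
end Aux

section Aux2
set_option linter.unusedSectionVars false
variable {V : Type*} [Fintype V]

lemma card_compl_fun (S : Finset V) :
    Nat.card {v : V // v ∉ S} = Fintype.card V - S.card := by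
  classical
  rw [Nat.card_eq_fintype_card]
  have := Fintype.card_subtype_compl (fun v : V => v ∈ S)
  simpa [Fintype.card_coe] using this

lemma myq_empty : myq (∅ : Finset (Finset V)) = Fintype.card V := by
  have h := count_mono (∅ : Finset (Finset V)) 2
  have e : {c : V → Fin 2 // ∀ S ∈ (∅ : Finset (Finset V)), ∀ a ∈ S, ∀ b ∈ S, c a = c b}
      ≃ (V → Fin 2) := Equiv.subtypeUnivEquiv (by simp)
  rw [Nat.card_congr e, Nat.card_fun, Nat.card_eq_fintype_card (α := Fin 2),
    Fintype.card_fin, Nat.card_eq_fintype_card] at h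
  exact (Nat.pow_right_injective le_rfl h).symm

lemma myq_singleton (S : Finset V) (hS : S.Nonempty) :
    myq ({S} : Finset (Finset V)) = Fintype.card V - S.card + 1 := by
  classical
  obtain ⟨s0, hs0⟩ := hS
  have h := count_mono ({S} : Finset (Finset V)) 2
  have e : {c : V → Fin 2 // ∀ S' ∈ ({S} : Finset (Finset V)), ∀ a ∈ S', ∀ b ∈ S', c a = c b}
      ≃ ({v : V // v ∉ S} → Fin 2) × Fin 2 :=
    { toFun := fun c => (fun v => c.1 v.1, c.1 s0)
      invFun := fun p => ⟨fun v => if h : v ∈ S then p.2 else p.1 ⟨v, h⟩, by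
        intro S' hS' a ha b hb
        rw [Finset.mem_singleton] at hS'
        subst hS'
        simp [ha, hb]⟩
      left_inv := fun c => by
        apply Subtype.ext
        funext v
        by_cases hv : v ∈ S
        · simpa [hv] using (c.2 S (Finset.mem_singleton_self S) s0 hs0 v hv)
        · simp [hv]
      right_inv := fun p => by
        ext v
        · simp [v.2]
        · simp [hs0] }
  rw [Nat.card_congr e, Nat.card_prod, Nat.card_fun, Nat.card_eq_fintype_card (α := Fin 2),
    Fintype.card_fin, card_compl_fun, ← pow_succ] at h
  exact (Nat.pow_right_injective le_rfl h).symm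

lemma myq_mono {T T' : Finset (Finset V)} (h : T ⊆ T') : myq T' ≤ myq T := by
  have hmap : ∀ a b : V, Relation.EqvGen (myrel T) a b → Relation.EqvGen (myrel T') a b := by
    intro a b hab
    refine Relation.EqvGen.mono ?_ _ _ hab
    rintro x y ⟨S, hS, hx, hy⟩
    exact ⟨S, h hS, hx, hy⟩
  refine Nat.card_le_card_of_surjective
    (Quotient.map' id (fun a b hab => hmap a b hab)) ?_
  intro x
  induction x using Quotient.ind
  exact ⟨Quotient.mk _ _, rfl⟩
end Aux2

section Aux3
set_option linter.unusedSectionVars false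
variable {V : Type*} [Fintype V] [DecidableEq V]

lemma myq_pair {S1 S2 : Finset V} {g : ℕ} (hne : S1 ≠ S2) (h1 : g ≤ S1.card)
    (h2 : g ≤ S2.card) (hg2 : 2 ≤ g) :
    myq ({S1, S2} : Finset (Finset V)) ≤ Fintype.card V - g := by
  classical
  set U : Finset V := S1 ∪ S2 with hU
  have hUN : U.card ≤ Fintype.card V := by
    simpa using Finset.card_le_card (Finset.subset_univ U)
  have hsub1 : S1 ⊆ U := Finset.subset_union_left
  have hsub2 : S2 ⊆ U := Finset.subset_union_right
  have hc1 : S1.card ≤ U.card := Finset.card_le_card hsub1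
  have hmem1 : S1 ∈ ({S1, S2} : Finset (Finset V)) := by simp
  have hmem2 : S2 ∈ ({S1, S2} : Finset (Finset V)) := by simp
  have hcardsum : Nat.card ({v : V // v ∉ U} ⊕ Unit) = Fintype.card V - U.card + 1 := by
    rw [Nat.card_sum, card_compl_fun, Nat.card_unique]
  have hcardsum2 : Nat.card ({v : V // v ∉ U} ⊕ (Unit ⊕ Unit))
      = Fintype.card V - U.card + 2 := by
    rw [Nat.card_sum, Nat.card_sum, card_compl_fun, Nat.card_unique]
  by_cases hint : (S1 ∩ S2).Nonempty
  · obtain ⟨w, hw⟩ := hint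
    have hw1 : w ∈ S1 := (Finset.mem_inter.mp hw).1
    have hw2 : w ∈ S2 := (Finset.mem_inter.mp hw).2
    have hsurj : Function.Surjective
        (fun x : {v : V // v ∉ U} ⊕ Unit => Sum.elim
          (fun v => (Quotient.mk (myst ({S1, S2} : Finset (Finset V))) v.1))
          (fun _ => Quotient.mk _ w) x) := by
      intro x
      induction x using Quotient.ind with
      | _ v =>
        by_cases hv : v ∈ U
        · rcases Finset.mem_union.mp hv with hv1 | hv2
          · exact ⟨Sum.inr (), Quotient.sound
              (Relation.EqvGen.rel _ _ ⟨S1, hmem1, hw1, hv1⟩)⟩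
          · exact ⟨Sum.inr (), Quotient.sound
              (Relation.EqvGen.rel _ _ ⟨S2, hmem2, hw2, hv2⟩)⟩
        · exact ⟨Sum.inl ⟨v, hv⟩, rfl⟩
    have hle := Nat.card_le_card_of_surjective _ hsurj
    rw [hcardsum] at hle
    have hUg : g + 1 ≤ U.card := by
      by_cases hsub : S2 ⊆ S1
      · have hlt := Finset.card_lt_card (hsub.ssubset_of_ne hne.symm)
        omega
      · obtain ⟨x, hx2, hx1⟩ := Finset.not_subset.mp hsub
        have hins : insert x S1 ⊆ U :=
          Finset.insert_subset (hsub2 hx2) hsub1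
        have := Finset.card_le_card hins
        rw [Finset.card_insert_of_notMem hx1] at this
        omega
    exact hle.trans (by omega)
  · have hdisj : Disjoint S1 S2 := Finset.disjoint_iff_inter_eq_empty.mpr
      (Finset.not_nonempty_iff_eq_empty.mp hint)
    obtain ⟨w1, hw1⟩ := Finset.card_pos.mp (by omega : 0 < S1.card)
    obtain ⟨w2, hw2⟩ := Finset.card_pos.mp (by omega : 0 < S2.card)
    have hsurj : Function.Surjective
        (fun x : {v : V // v ∉ U} ⊕ (Unit ⊕ Unit) => Sum.elim
          (fun v => (Quotient.mk (myst ({S1, S2} : Finset (Finset V))) v.1))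
          (Sum.elim (fun _ => Quotient.mk _ w1) (fun _ => Quotient.mk _ w2)) x) := by
      intro x
      induction x using Quotient.ind with
      | _ v =>
        by_cases hv : v ∈ U
        · rcases Finset.mem_union.mp hv with hv1 | hv2
          · exact ⟨Sum.inr (Sum.inl ()), Quotient.sound
              (Relation.EqvGen.rel _ _ ⟨S1, hmem1, hw1, hv1⟩)⟩
          · exact ⟨Sum.inr (Sum.inr ()), Quotient.sound
              (Relation.EqvGen.rel _ _ ⟨S2, hmem2, hw2, hv2⟩)⟩
        · exact ⟨Sum.inl ⟨v, hv⟩, rfl⟩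
    have hle := Nat.card_le_card_of_surjective _ hsurj
    rw [hcardsum2] at hle
    have hUcard : U.card = S1.card + S2.card := Finset.card_union_of_disjoint hdisj
    exact hle.trans (by omega)
end Aux3


section Aux4
set_option linter.unusedSectionVars false
variable {V : Type*} [Fintype V] [DecidableEq V] (D : V → V → Prop)

lemma finCongr_finRotate {a b : ℕ} (h : a = b) (i : Fin a) :
    finCongr h (finRotate a i) = finRotate b (finCongr h i) := by subst h; simp

lemma cycleSet_of_cycleFun {m : ℕ} {f : Fin m → V} (hf : IsCycleFun D f) :
    IsCycleSet D (Finset.univ.image f) ∧ (Finset.univ.image f).card = m := by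
  obtain ⟨hm, hinj, hD⟩ := hf
  set S := Finset.univ.image f with hSdef
  have hcard : S.card = m := by
    rw [hSdef, Finset.card_image_of_injective _ hinj, Finset.card_univ, Fintype.card_fin]
  have g0 : Fin m → {x // x ∈ S} := fun i =>
    ⟨f i, Finset.mem_image_of_mem f (Finset.mem_univ i)⟩
  refine ⟨⟨by omega, ?_⟩, hcard⟩
  have hg0 : Function.Bijective (fun i : Fin m =>
      (⟨f i, Finset.mem_image_of_mem f (Finset.mem_univ i)⟩ : {x // x ∈ S})) := by
    refine (Fintype.bijective_iff_injective_and_card _).2 ⟨?_, ?_⟩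
    · intro i j h
      exact hinj (congrArg Subtype.val h)
    · rw [Fintype.card_fin, Fintype.card_coe, hcard]
  refine ⟨(finCongr hcard).trans (Equiv.ofBijective _ hg0), fun i => ?_⟩
  have h2 : ((finCongr hcard).trans (Equiv.ofBijective _ hg0)) (finRotate S.card i)
      = (Equiv.ofBijective _ hg0) (finRotate m (finCongr hcard i)) := by
    exact congrArg (Equiv.ofBijective _ hg0) (finCongr_finRotate hcard i)
  rw [h2]
  exact hD (finCongr hcard i)

lemma cycleFun_of_cycleSet {S : Finset V} (hS : IsCycleSet D S) :
    ∃ f : Fin S.card → V, IsCycleFun D f ∧ ∀ i, f i ∈ S := by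
  obtain ⟨h2, e, he⟩ := hS
  refine ⟨fun i => (e i : V), ⟨h2, ?_, he⟩, fun i => (e i).2⟩
  intro i j h
  exact e.injective (Subtype.ext h)

lemma not_proper_iff {k : ℕ} (c : V → Fin k) :
    ¬ ProperColoring D c ↔ ∃ S, IsCycleSet D S ∧ ∀ a ∈ S, ∀ b ∈ S, c a = c b := by
  constructor
  · intro h
    rw [ProperColoring] at h
    push_neg at h
    obtain ⟨m, f, hf, hmono⟩ := h
    refine ⟨Finset.univ.image f, (cycleSet_of_cycleFun D hf).1, ?_⟩
    intro a ha b hb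
    obtain ⟨i, -, rfl⟩ := Finset.mem_image.mp ha
    obtain ⟨j, -, rfl⟩ := Finset.mem_image.mp hb
    exact hmono i j
  · rintro ⟨S, hS, hmono⟩ hprop
    obtain ⟨f, hf, hfS⟩ := cycleFun_of_cycleSet D hS
    obtain ⟨i, j, hij⟩ := hprop _ f hf
    exact hij (hmono _ (hfS i) _ (hfS j))

lemma girth_le_card {g : ℕ} (hg : HasGirth D g) {S : Finset V} (hS : IsCycleSet D S) :
    g ≤ S.card := by
  obtain ⟨f, hf, -⟩ := cycleFun_of_cycleSet D hS
  exact hg.2 _ f hf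

end Aux4

section Aux5
set_option linter.unusedSectionVars false
open Finset
variable {V : Type*} [Fintype V] [DecidableEq V] (D : V → V → Prop)

/-- The finset of all cycle sets of `D`. -/
noncomputable def cycF (D : V → V → Prop) : Finset (Finset V) :=
  @Finset.filter _ (fun S => IsCycleSet D S) (Classical.decPred _) Finset.univ

lemma mem_cycF {S : Finset V} : S ∈ cycF D ↔ IsCycleSet D S := by
  classical
  simp [cycF]

lemma prod_mono_eq {k : ℕ} (T : Finset (Finset V)) (c : V → Fin k) :
    (∏ S ∈ T, (if (∀ a ∈ S, ∀ b ∈ S, c a = c b) then (-1 : ℚ) else 0)) =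
    (-1 : ℚ) ^ T.card * (if (∀ S ∈ T, ∀ a ∈ S, ∀ b ∈ S, c a = c b) then 1 else 0) := by
  classical
  by_cases h : ∀ S ∈ T, ∀ a ∈ S, ∀ b ∈ S, c a = c b
  · rw [if_pos h, mul_one]
    rw [Finset.prod_congr rfl (fun S hS => if_pos (h S hS))]
    simp
  · rw [if_neg h, mul_zero]
    rcases not_forall.mp h with ⟨S, hS2⟩
    rcases _root_.not_imp.mp hS2 with ⟨hS, hne⟩
    exact Finset.prod_eq_zero hS (if_neg hne)

lemma sum_mono_count (T : Finset (Finset V)) (k : ℕ) :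
    (∑ c : V → Fin k, (if (∀ S ∈ T, ∀ a ∈ S, ∀ b ∈ S, c a = c b) then (1 : ℚ) else 0)) =
    (k : ℚ) ^ myq T := by
  classical
  rw [Finset.sum_boole]
  have h1 : #(Finset.univ.filter (fun c : V → Fin k => ∀ S ∈ T, ∀ a ∈ S, ∀ b ∈ S, c a = c b))
      = k ^ myq T := by
    rw [← Fintype.card_subtype, ← Nat.card_eq_fintype_card, count_mono]
  rw [h1]
  push_cast
  ring

lemma eval_formula (k : ℕ) :
    (numColorings V D k : ℚ) =
      ∑ T ∈ (cycF D).powerset, (-1 : ℚ) ^ T.card * (k : ℚ) ^ myq T := by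
  classical
  have h0 : (numColorings V D k : ℚ)
      = ∑ c : V → Fin k, (if ProperColoring D c then (1 : ℚ) else 0) := by
    rw [Finset.sum_boole, numColorings, Nat.card_eq_fintype_card, Fintype.card_subtype]
  have h1 : ∀ c : V → Fin k, (if ProperColoring D c then (1 : ℚ) else 0)
      = ∏ S ∈ cycF D, ((if (∀ a ∈ S, ∀ b ∈ S, c a = c b) then (-1 : ℚ) else 0) + 1) := by
    intro c
    by_cases hp : ProperColoring D c
    · rw [if_pos hp]
      symm
      apply Finset.prod_eq_one
      intro S hS
      have hne : ¬ (∀ a ∈ S, ∀ b ∈ S, c a = c b) := by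
        intro hmono
        exact ((not_proper_iff D c).mpr ⟨S, (mem_cycF D).mp hS, hmono⟩) hp
      rw [if_neg hne, zero_add]
    · rw [if_neg hp]
      obtain ⟨S, hS, hmono⟩ := (not_proper_iff D c).mp hp
      symm
      apply Finset.prod_eq_zero ((mem_cycF D).mpr hS)
      rw [if_pos hmono]
      ring
  rw [h0]
  rw [Finset.sum_congr rfl (fun c _ => h1 c)]
  have h2 : ∀ c : V → Fin k, (∏ S ∈ cycF D,
      ((if (∀ a ∈ S, ∀ b ∈ S, c a = c b) then (-1 : ℚ) else 0) + 1))
      = ∑ T ∈ (cycF D).powerset,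
          (-1 : ℚ) ^ T.card * (if (∀ S ∈ T, ∀ a ∈ S, ∀ b ∈ S, c a = c b) then 1 else 0) := by
    intro c
    rw [Finset.prod_add]
    refine Finset.sum_congr rfl (fun T hT => ?_)
    rw [Finset.prod_const_one, mul_one, prod_mono_eq]
  rw [Finset.sum_congr rfl (fun c _ => h2 c), Finset.sum_comm]
  refine Finset.sum_congr rfl (fun T hT => ?_)
  rw [← Finset.mul_sum, sum_mono_count]
end Aux5

open Finset Polynomial

/-- In the dichromatic polynomial of a digraph D with n vertices and girth g, the
coefficients of x^(n−1), …, x^(n−g+2) vanish, and the coefficient of x^(n−g+1)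
is minus the number of directed cycles of length g. -/
theorem stmt_15 {V : Type*} [Fintype V] (D : V → V → Prop) (hloopless : ∀ v, ¬ D v v)
    (n g : ℕ) (hn : n = Fintype.card V) (hg : HasGirth D g)
    (Q : Polynomial ℚ)
    (hQ : ∀ k : ℕ, 0 < k → Q.eval (k : ℚ) = (numColorings V D k : ℚ)) :
    (∀ j : ℕ, n - g + 2 ≤ j → j ≤ n - 1 → Q.coeff j = 0) ∧
    Q.coeff (n - g + 1) =
      -(Nat.card {S : Finset V // S.card = g ∧ IsCycleSet D S} : ℚ) := by

  classical
  subst hn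
  obtain ⟨f0, hf0⟩ := hg.1
  have hg2 : 2 ≤ g := hf0.1
  have hgN : g ≤ Fintype.card V := by
    have := Fintype.card_le_of_injective f0 hf0.2.1
    simpa using this
  have hcardle : ∀ S : Finset V, S.card ≤ Fintype.card V := fun S => by
    simpa using Finset.card_le_card (Finset.subset_univ S)
  have hgirth : ∀ S ∈ cycF D, g ≤ S.card := fun S hS =>
    girth_le_card D hg ((mem_cycF D).mp hS)
  -- the explicit polynomial
  set P : Polynomial ℚ :=
    ∑ T ∈ (cycF D).powerset, Polynomial.C ((-1 : ℚ) ^ T.card) * Polynomial.X ^ myq T with hP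
  have hPeval : ∀ x : ℚ, P.eval x = ∑ T ∈ (cycF D).powerset, (-1 : ℚ) ^ T.card * x ^ myq T := by
    intro x
    rw [hP, Polynomial.eval_finset_sum]
    exact Finset.sum_congr rfl fun T _ => by rw [eval_mul, eval_pow, eval_C, eval_X]
  have hQP : Q = P := by
    apply Polynomial.eq_of_infinite_eval_eq
    apply Set.infinite_of_injective_forall_mem (f := fun m : ℕ => ((m + 1 : ℕ) : ℚ))
    · intro a b hab
      have : a + 1 = b + 1 := Nat.cast_injective hab
      omega
    · intro m
      simp only [Set.mem_setOf_eq]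
      rw [hQ (m + 1) (Nat.succ_pos m), hPeval, eval_formula]
  have hcoeff : ∀ j : ℕ, P.coeff j =
      ∑ T ∈ (cycF D).powerset, (-1 : ℚ) ^ T.card * (if j = myq T then 1 else 0) := by
    intro j
    rw [hP, Polynomial.finset_sum_coeff]
    exact Finset.sum_congr rfl fun T _ => by rw [Polynomial.coeff_C_mul, Polynomial.coeff_X_pow]
  have hclass : ∀ T ∈ (cycF D).powerset,
      (T = ∅ ∧ myq T = Fintype.card V) ∨
      (∃ S : Finset V, T = {S} ∧ IsCycleSet D S ∧ g ≤ S.card ∧ S.card ≤ Fintype.card V ∧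
        myq T = Fintype.card V - S.card + 1) ∨
      (2 ≤ T.card ∧ myq T ≤ Fintype.card V - g) := by
    intro T hT
    rw [Finset.mem_powerset] at hT
    rcases Nat.lt_or_ge T.card 2 with h2 | h2
    · rcases Nat.lt_or_ge T.card 1 with h1 | h1
      · left
        have hTe : T = ∅ := Finset.card_eq_zero.mp (by omega)
        exact ⟨hTe, by rw [hTe, myq_empty]⟩
      · right; left
        obtain ⟨S, rfl⟩ := Finset.card_eq_one.mp (show T.card = 1 by omega)
        have hScyc : IsCycleSet D S := (mem_cycF D).mp (hT (Finset.mem_singleton_self S))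
        have hSg : g ≤ S.card := hgirth S (hT (Finset.mem_singleton_self S))
        have hSne : S.Nonempty := Finset.card_pos.mp (by omega)
        exact ⟨S, rfl, hScyc, hSg, hcardle S, myq_singleton S hSne⟩
    · right; right
      refine ⟨h2, ?_⟩
      obtain ⟨S1, hS1, S2, hS2, hne⟩ := Finset.one_lt_card.mp h2
      have hsub : ({S1, S2} : Finset (Finset V)) ⊆ T :=
        Finset.insert_subset hS1 (Finset.singleton_subset_iff.mpr hS2)
      exact (myq_mono hsub).trans
        (myq_pair hne (hgirth S1 (hT hS1)) (hgirth S2 (hT hS2)) hg2)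
  constructor
  · intro j hj1 hj2
    rw [hQP, hcoeff]
    apply Finset.sum_eq_zero
    intro T hT
    rcases hclass T hT with ⟨-, hq⟩ | ⟨S, -, -, hSg, hSN, hq⟩ | ⟨-, hq⟩
    · rw [if_neg (by omega), mul_zero]
    · rw [if_neg (by omega), mul_zero]
    · rw [if_neg (by omega), mul_zero]
  · rw [hQP, hcoeff]
    set t : Finset (Finset (Finset V)) :=
      ((cycF D).filter (fun S => S.card = g)).image (fun S => ({S} : Finset (Finset V))) with ht
    have key : ∀ T ∈ (cycF D).powerset,
        (-1 : ℚ) ^ T.card * (if Fintype.card V - g + 1 = myq T then 1 else 0) =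
        if T ∈ t then -1 else 0 := by
      intro T hT
      by_cases hmem : T ∈ t
      · rw [if_pos hmem]
        obtain ⟨S, hSf, rfl⟩ := Finset.mem_image.mp hmem
        obtain ⟨hScyc, hSg⟩ := Finset.mem_filter.mp hSf
        have hScyc' : IsCycleSet D S := (mem_cycF D).mp hScyc
        have hSne : S.Nonempty := Finset.card_pos.mp (by omega)
        have hq : myq ({S} : Finset (Finset V)) = Fintype.card V - g + 1 := by
          rw [myq_singleton S hSne, hSg]
        rw [if_pos hq.symm, Finset.card_singleton]
        ring
      · rw [if_neg hmem]
        have hne2 : Fintype.card V - g + 1 ≠ myq T := by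
          intro heq
          rcases hclass T hT with ⟨-, hq⟩ | ⟨S, rfl, hScyc, hSg2, hSN, hq⟩ | ⟨-, hq⟩
          · omega
          · have hScard : S.card = g := by omega
            exact hmem (Finset.mem_image.mpr ⟨S, Finset.mem_filter.mpr
              ⟨(mem_cycF D).mpr hScyc, hScard⟩, rfl⟩)
          · omega
        rw [if_neg hne2, mul_zero]
    rw [Finset.sum_congr rfl key, Finset.sum_ite_mem]
    have hts : (cycF D).powerset ∩ t = t := by
      rw [Finset.inter_eq_right]
      intro T hTmem
      obtain ⟨S, hSf, rfl⟩ := Finset.mem_image.mp hTmem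
      exact Finset.mem_powerset.mpr
        (Finset.singleton_subset_iff.mpr (Finset.mem_filter.mp hSf).1)
    rw [hts, Finset.sum_const, ht,
      Finset.card_image_of_injective _ Finset.singleton_injective]
    have hcount : Nat.card {S : Finset V // S.card = g ∧ IsCycleSet D S}
        = ((cycF D).filter (fun S => S.card = g)).card := by
      rw [Nat.card_eq_fintype_card, Fintype.card_subtype]
      congr 1
      ext S
      simp [cycF, and_comm]
    rw [hcount]
    simp
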